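/- arXiv:1308.2421 — 2 statements merged into one kernel-verified Lean document; each statement's English description precedes it below -/
import Mathlib

section
/- For the generic Grassmann matrix X = Σ_{i,j} x_{ij} e_{ij} ∈ M_n(E), the traces of all even powers vanish: tr(X^{2i}) = 0 for all i ≥ 1. -/
/-- The generic Grassmann matrix over the exterior algebra on `n²` generators. -/
noncomputable def grassX (F : Type*) [Field F] (n : ℕ) :
    Matrix (Fin n) (Fin n) (ExteriorAlgebra F (Fin n × Fin n → F)) :=
  fun i j => ExteriorAlgebra.ι F (Pi.single (i, j) (1 : F))

lemma grassX_pow_comm (F : Type*) [Field F] (n : ℕ) (m : ℕ)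
    (v : Fin n × Fin n → F) (k l : Fin n) :
    ExteriorAlgebra.ι F v * (grassX F n ^ m) k l =
      (-1 : ExteriorAlgebra F (Fin n × Fin n → F)) ^ m *
        ((grassX F n ^ m) k l * ExteriorAlgebra.ι F v) := by
  induction m generalizing k l with
  | zero =>
    by_cases h : k = l <;> simp [Matrix.one_apply, h]
  | succ m ih =>
    have hmul : (grassX F n ^ (m + 1)) k l =
        ∑ j, (grassX F n ^ m) k j * grassX F n j l := by
      rw [pow_succ, Matrix.mul_apply]
    rw [hmul, Finset.mul_sum, Finset.sum_mul, Finset.mul_sum]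
    rw [pow_succ]
    congr 1
    ext j
    have h1 : ExteriorAlgebra.ι F v * ((grassX F n ^ m) k j * grassX F n j l)
        = (ExteriorAlgebra.ι F v * (grassX F n ^ m) k j) * grassX F n j l :=
      (mul_assoc _ _ _).symm
    rw [h1, ih]
    have h2 : ExteriorAlgebra.ι F v * grassX F n j l =
        - (grassX F n j l * ExteriorAlgebra.ι F v) := by
      have := ExteriorAlgebra.ι_add_mul_swap (R := F) v (Pi.single (j, l) (1 : F))
      simp only [grassX]
      exact eq_neg_of_add_eq_zero_left this
    calc (-1 : ExteriorAlgebra F (Fin n × Fin n → F)) ^ m *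
          ((grassX F n ^ m) k j * ExteriorAlgebra.ι F v) * grassX F n j l
        = (-1) ^ m * ((grassX F n ^ m) k j *
            (ExteriorAlgebra.ι F v * grassX F n j l)) := by noncomm_ring
      _ = (-1) ^ m * ((grassX F n ^ m) k j *
            (-(grassX F n j l * ExteriorAlgebra.ι F v))) := by rw [h2]
      _ = (-1) ^ m * -1 * ((grassX F n ^ m) k j * grassX F n j l *
            ExteriorAlgebra.ι F v) := by noncomm_ring

/-- The traces of all even powers of the generic Grassmann matrix vanish. -/
theorem trace_grassX_even_pow (F : Type*) [Field F] [CharZero F] (n : ℕ)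
    (i : ℕ) (hi : 1 ≤ i) :
    Matrix.trace (grassX F n ^ (2 * i)) = 0 := by
  set X := grassX F n
  set m := 2 * i - 1 with hm
  have hmm : 2 * i = 1 + m := by omega
  have hodd : Odd m := ⟨i - 1, by omega⟩
  have key : Matrix.trace (X ^ (2 * i)) = - Matrix.trace (X ^ (2 * i)) := by
    have hterm : ∀ k j : Fin n, X k j * (X ^ m) j k = -((X ^ m) j k * X k j) := by
      intro k j
      have := grassX_pow_comm F n m (Pi.single (k, j) (1 : F)) j k
      rw [hodd.neg_one_pow] at this
      have hXkj : X k j = ExteriorAlgebra.ι F (Pi.single (k, j) (1 : F)) := rfl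
      rw [hXkj, this]
      noncomm_ring
    calc Matrix.trace (X ^ (2 * i))
        = ∑ k, ∑ j, X k j * (X ^ m) j k := by
          rw [hmm, add_comm 1 m, pow_succ', Matrix.trace]
          simp [Matrix.mul_apply]
      _ = ∑ k, ∑ j, -((X ^ m) j k * X k j) := by
          simp only [hterm]
      _ = - ∑ j, ∑ k, (X ^ m) j k * X k j := by
          rw [Finset.sum_comm]
          simp
      _ = - Matrix.trace (X ^ m * X) := by
          simp [Matrix.trace, Matrix.mul_apply]
      _ = - Matrix.trace (X ^ (2 * i)) := by
          rw [← pow_succ, show m + 1 = 2 * i by omega]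
  have h2 : Matrix.trace (X ^ (2 * i)) + Matrix.trace (X ^ (2 * i)) = 0 :=
    add_eq_zero_iff_eq_neg.mpr key
  have h2' : (2 : F) • Matrix.trace (X ^ (2 * i)) = 0 := by
    rw [two_smul]; exact h2
  have := congrArg (fun x => ((2 : F)⁻¹) • x) h2'
  simpa [smul_smul, inv_mul_cancel₀ (two_ne_zero (α := F))] using this
end

section
/- The standard polynomial S_k does not vanish identically on M_n for k < 2n: there exist matrices A_1,…,A_{2n-1} ∈ M_n(Q) (a suitable sequence of matrix units E_{11}, E_{12}, E_{22}, E_{23}, …) with S_{2n-1}(A_1,…,A_{2n-1}) ≠ 0; hence 2n is the minimal degree of a standard identity for M_n. -/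
open Equiv

/-- The standard polynomial `S_k`. -/
def stdPoly {R : Type*} [Ring R] (h : ℕ) (v : Fin h → R) : R :=
  ∑ σ : Perm (Fin h), (Perm.sign σ : ℤ) • (List.ofFn (fun i => v (σ i))).prod

private lemma prod_chain {n : ℕ} [NeZero n] :
    ∀ (l : List (Fin n × Fin n)) (hl : 0 < l.length),
    (l.map (fun p => Matrix.single p.1 p.2 (1 : ℚ))).prod =
      if l.IsChain (fun a b => a.2 = b.1) then
        Matrix.single (l.get ⟨0, hl⟩).1 (l.get ⟨l.length - 1, by omega⟩).2 (1 : ℚ)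
      else 0 := by
  intro l
  induction l with
  | nil => intro h; simp at h
  | cons p t ih =>
    intro hl
    cases t with
    | nil => simp [List.isChain_singleton]
    | cons q s =>
      have hqs : 0 < (q :: s).length := by simp
      have hrest := ih hqs
      have hprod : ((p :: q :: s).map
          (fun p => Matrix.single p.1 p.2 (1 : ℚ))).prod =
          Matrix.single p.1 p.2 (1 : ℚ) *
          ((q :: s).map (fun p => Matrix.single p.1 p.2 (1 : ℚ))).prod := by
        simp
      rw [hprod, hrest]
      by_cases hpq : p.2 = q.1
      · by_cases hc : (q :: s).IsChain (fun a b => a.2 = b.1)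
        · have hcc : (p :: q :: s).IsChain (fun a b => a.2 = b.1) :=
            List.isChain_cons_cons.mpr ⟨hpq, hc⟩
          rw [if_pos hc, if_pos hcc]
          have hq1 : ((q :: s).get ⟨0, hqs⟩).1 = p.2 := by simp [hpq]
          rw [hq1, Matrix.single_mul_single_same, one_mul]
          congr 1
        · have hcc : ¬ (p :: q :: s).IsChain (fun a b => a.2 = b.1) :=
            fun hcc => hc (List.isChain_cons_cons.mp hcc).2
          rw [if_neg hc, if_neg hcc, mul_zero]
      · have hcc : ¬ (p :: q :: s).IsChain (fun a b => a.2 = b.1) :=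
          fun hcc => hpq (List.isChain_cons_cons.mp hcc).1
        by_cases hc : (q :: s).IsChain (fun a b => a.2 = b.1)
        · rw [if_pos hc, if_neg hcc]
          have hq1 : ((q :: s).get ⟨0, hqs⟩).1 = q.1 := by simp
          rw [hq1, Matrix.single_mul_single_of_ne (h := hpq)]
        · rw [if_neg hc, if_neg hcc, mul_zero]

/-- the staircase index sequence -/
private def stIdx (n : ℕ) [NeZero n] (i : Fin (2 * n - 1)) : Fin n × Fin n :=
  (⟨i.val / 2, by have := i.2; omega⟩, ⟨(i.val + 1) / 2, by have := i.2; omega⟩)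

/-- Uniqueness of the chaining permutation: only the identity chains the staircase. -/
private lemma chain_unique {n : ℕ} [NeZero n] (σ : Perm (Fin (2 * n - 1)))
    (h : ∀ i : ℕ, (hi : i + 1 < 2 * n - 1) →
      ((σ ⟨i, by omega⟩).val + 1) / 2 = (σ ⟨i + 1, hi⟩).val / 2) : σ = 1 := by
  have hmpos : 0 < 2 * n - 1 := by have := NeZero.pos n; omega
  have key : ∀ p : ℕ, ∀ hp : p < 2 * n - 1, (σ.symm ⟨p, hp⟩).val = p := by
    intro p
    induction p using Nat.strong_induction_on with
    | _ p IH =>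
      intro hp
      obtain ⟨t, ht⟩ : ∃ t : Fin (2 * n - 1), σ.symm ⟨p, hp⟩ = t := ⟨_, rfl⟩
      rw [ht]
      have hst : σ t = ⟨p, hp⟩ := by rw [← ht]; exact σ.apply_symm_apply _
      have htm : t.val - 1 < 2 * n - 1 := by have := t.2; omega
      -- general predecessor fact: if t.val ≥ 1 then σ ⟨t-1⟩ chains into p
      have pred : 1 ≤ t.val → ((σ ⟨t.val - 1, htm⟩).val + 1) / 2 = p / 2 := by
        intro ht1
        have hpred := h (t.val - 1) (by have := t.2; omega)
        have he : (⟨t.val - 1 + 1, by have := t.2; omega⟩ : Fin (2 * n - 1)) = t :=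
          Fin.ext (by simp; omega)
        rw [he, hst] at hpred
        exact hpred
      by_cases hp0 : p = 0
      · subst hp0
        by_contra ht0
        have ht1 : 1 ≤ t.val := by omega
        have hpred := pred ht1
        have hq0 : (σ ⟨t.val - 1, htm⟩).val = 0 := by omega
        have : σ ⟨t.val - 1, htm⟩ = σ t := by
          rw [hst]; exact Fin.ext hq0
        have := σ.injective this
        have := congrArg Fin.val this
        simp at this
        omega
      · -- p ≥ 1 : first t ≥ 1 because σ.symm 0 = 0 by IH
        have h0 : (σ.symm ⟨0, hmpos⟩).val = 0 := IH 0 (by omega) hmpos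
        have ht1 : 1 ≤ t.val := by
          by_contra ht0
          have he : σ.symm ⟨p, hp⟩ = σ.symm ⟨0, hmpos⟩ := by
            apply Fin.ext
            rw [ht, h0]
            omega
          have := congrArg Fin.val (σ.symm.injective he)
          simp at this
          omega
        have hpred := pred ht1
        obtain ⟨q, hqd⟩ : ∃ q : Fin (2 * n - 1), σ ⟨t.val - 1, htm⟩ = q := ⟨_, rfl⟩
        rw [hqd] at hpred
        -- q ≠ p
        have hqnep : q.val ≠ p := by
          intro hcon
          have : σ ⟨t.val - 1, htm⟩ = σ t := by
            rw [hst, hqd]; exact Fin.ext hcon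
          have := congrArg Fin.val (σ.injective this)
          simp at this
          omega
        -- hence q < p (since (q+1)/2 = p/2 and q ≠ p forces q ∈ {p-1, p-2} suitably)
        have hqltp : q.val < p := by omega
        -- and σ.symm q = q by IH, so t - 1 = q
        have hIHq : (σ.symm q).val = q.val := by
          have := IH q.val hqltp q.2
          simpa using this
        have htq : t.val - 1 = q.val := by
          have : σ.symm q = ⟨t.val - 1, htm⟩ := by
            rw [← hqd]; exact σ.symm_apply_apply _
          rw [this] at hIHq
          simpa using hIHq
        -- now rule out the bad case q = p - 2 (p odd)
        by_cases hq2 : q.val = p - 1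
        · omega
        · exfalso
          -- then p is odd, q = p - 2, and t = p - 1; but σ.symm ⟨p-1⟩ = p - 1 by IH
          have hodd : p % 2 = 1 ∧ q.val + 2 = p := by omega
          have hpm : p - 1 < 2 * n - 1 := by omega
          have hIHp1 : (σ.symm ⟨p - 1, hpm⟩).val = p - 1 := IH (p - 1) (by omega) hpm
          have : σ.symm ⟨p - 1, hpm⟩ = σ.symm ⟨p, hp⟩ := by
            apply Fin.ext
            rw [hIHp1, ht]
            omega
          have := congrArg Fin.val (σ.symm.injective this)
          simp at this
          omega
  apply Equiv.ext
  intro i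
  have h1 : σ.symm (σ i) = i := σ.symm_apply_apply i
  have h2 : (σ.symm (σ i)).val = (σ i).val := key (σ i).val (σ i).2
  simp only [Perm.one_apply]
  have : (σ i).val = i.val := by rw [← h2, h1]
  exact Fin.ext this

/-- The standard polynomial `S_{2n-1}` does not vanish identically on `M_n(ℚ)`: there is a
sequence of `2n-1` matrix units (the staircase `E₁₁, E₁₂, E₂₂, E₂₃, …`) on which it is
nonzero. Hence `2n` is the minimal degree of a standard identity for `M_n`. -/
theorem stdPoly_not_identity_below_two_n (n : ℕ) (hn : 1 ≤ n) :
    ∃ idx : Fin (2 * n - 1) → Fin n × Fin n,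
      stdPoly (2 * n - 1)
        (fun i => Matrix.single (idx i).1 (idx i).2 (1 : ℚ)) ≠ 0 := by
  have : NeZero n := ⟨by omega⟩
  refine ⟨stIdx n, ?_⟩
  set m := 2 * n - 1 with hm
  have hmpos : 0 < m := by omega
  -- rewrite each term's product via prod_chain
  have hterm : ∀ σ : Perm (Fin m),
      (List.ofFn (fun i => Matrix.single (stIdx n (σ i)).1 (stIdx n (σ i)).2 (1 : ℚ))).prod
        = if ((List.finRange m).map (fun i => stIdx n (σ i))).IsChain (fun a b => a.2 = b.1) then
            Matrix.single (stIdx n (σ ⟨0, hmpos⟩)).1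
              (stIdx n (σ ⟨m - 1, by omega⟩)).2 (1 : ℚ)
          else 0 := by
    intro σ
    have h1 : (List.ofFn (fun i => Matrix.single (stIdx n (σ i)).1 (stIdx n (σ i)).2 (1 : ℚ)))
        = ((List.finRange m).map (fun i => stIdx n (σ i))).map
            (fun p => Matrix.single p.1 p.2 (1 : ℚ)) := by
      rw [List.map_map, List.ofFn_eq_map]
      rfl
    rw [h1, prod_chain _ (by simpa using hmpos)]
    congr 2 <;> simp [List.getElem_finRange, List.get_eq_getElem]
  -- the chain condition holds only for the identity
  have hchain : ∀ σ : Perm (Fin m),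
      ((List.finRange m).map (fun i => stIdx n (σ i))).IsChain (fun a b => a.2 = b.1) ↔ σ = 1 := by
    intro σ
    rw [List.isChain_iff_getElem]
    constructor
    · intro hc
      apply chain_unique σ
      intro i hi
      have := hc i (by simpa using (by omega : i + 1 < m))
      simp only [List.get_eq_getElem, List.getElem_map, List.getElem_finRange] at this
      have h2 : (Fin.cast rfl ⟨i, by omega⟩ : Fin m) = ⟨i, by omega⟩ := rfl
      -- `this : (stIdx n (σ _)).2 = (stIdx n (σ _)).1`
      have := congrArg Fin.val this
      simpa [stIdx] using this
    · intro hσ i hi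
      subst hσ
      simp only [List.get_eq_getElem, List.getElem_map, List.getElem_finRange, Perm.one_apply]
      apply Fin.ext
      simp [stIdx]
  -- evaluate the sum
  unfold stdPoly
  have hsum : ∑ σ : Perm (Fin m), (Perm.sign σ : ℤ) •
      (List.ofFn (fun i => Matrix.single (stIdx n (σ i)).1 (stIdx n (σ i)).2 (1 : ℚ))).prod
      = Matrix.single (stIdx n ((1 : Perm (Fin m)) ⟨0, hmpos⟩)).1
          (stIdx n ((1 : Perm (Fin m)) ⟨m - 1, by omega⟩)).2 (1 : ℚ) := by
    rw [Finset.sum_eq_single (1 : Perm (Fin m))]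
    · rw [hterm, if_pos ((hchain 1).mpr rfl)]
      simp
    · intro σ _ hσ
      rw [hterm, if_neg (fun hc => hσ ((hchain σ).mp hc))]
      simp
    · intro h; exact absurd (Finset.mem_univ _) h
  rw [hsum]
  intro hzero
  have := congrFun (congrFun hzero (stIdx n ((1 : Perm (Fin m)) ⟨0, hmpos⟩)).1)
    (stIdx n ((1 : Perm (Fin m)) ⟨m - 1, by omega⟩)).2
  rw [Matrix.single_apply_same] at this
  simp at this
end
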